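/- Let K be a finite field with Q elements, I a finite index set, and (β_i)_{i∈I} a family of elements of K^× that generates K^× as a group. Let ψ : ℤ^I → K^× be the group homomorphism sending v = (v_i)_{i∈I} to ∏_{i∈I} β_i^{v_i}, and let Γ be a subgroup of ℤ^I contained in the kernel of ψ, so that ψ induces a surjective homomorphism φ : ℤ^I/Γ → K^×. Suppose ℤ^I/Γ is finite with invariant factor decomposition ℤ^I/Γ = ⟨e(1)⟩ ⊕ ⟨e(2)⟩ ⊕ ⋯ ⊕ ⟨e(k)⟩, where e(j) has order d_j in ℤ^I/Γ and d_j divides d_{j+1} for 1 ≤ j < k, with k ≥ 2. Let B ≥ 2 be an integer. If gcd(d_{k-1}, Q−1) is B-smooth, then there exists a B-smooth positive integer v dividing Q−1 such that (Q−1)/v divides the order of φ(e(k)) in K^×. -/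

import Mathlib

set_option maxHeartbeats 1000000
set_option synthInstance.maxHeartbeats 400000

/-- Lemma 2.1: if the gcd of the second largest invariant factor of `ℤ^I/Γ` with `Q-1`
is `B`-smooth, then the image of the generator of the largest invariant factor has order
divisible by `(Q-1)/v` for some `B`-smooth `v` dividing `Q-1`. -/
theorem stmt0 {K : Type*} [Field K] [Fintype K] {I : Type*} [Fintype I]
    (β : I → Kˣ) (hβ : Subgroup.closure (Set.range β) = ⊤)
    (Γ : AddSubgroup (I → ℤ))
    (hΓ : ∀ v ∈ Γ, (∏ i, β i ^ v i) = 1)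
    (φ : ((I → ℤ) ⧸ Γ) →+ Additive Kˣ)
    (hφ : ∀ v : I → ℤ, φ (QuotientAddGroup.mk v) = Additive.ofMul (∏ i, β i ^ v i))
    [Finite ((I → ℤ) ⧸ Γ)]
    (k : ℕ) (hk : 2 ≤ k) (e : Fin k → (I → ℤ) ⧸ Γ) (d : Fin k → ℕ)
    (hinternal : DirectSum.IsInternal (fun j : Fin k => AddSubgroup.zmultiples (e j)))
    (hord : ∀ j, addOrderOf (e j) = d j)
    (hdvd : ∀ j : Fin k, ∀ hj : (j : ℕ) + 1 < k, d j ∣ d ⟨(j : ℕ) + 1, hj⟩)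
    (B : ℕ) (hB : 2 ≤ B)
    (hsmooth : ∀ ℓ : ℕ, ℓ.Prime →
      ℓ ∣ Nat.gcd (d ⟨k - 2, by omega⟩) (Fintype.card K - 1) → ℓ ≤ B) :
    ∃ v : ℕ, 0 < v ∧ v ∣ Fintype.card K - 1 ∧
      (∀ ℓ : ℕ, ℓ.Prime → ℓ ∣ v → ℓ ≤ B) ∧
      (Fintype.card K - 1) / v ∣ orderOf (Additive.toMul (φ (e ⟨k - 1, by omega⟩))) := by
  classical
  set Q1 := Fintype.card K - 1 with hQ1
  set g : Kˣ := Additive.toMul (φ (e ⟨k - 1, by omega⟩)) with hg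
  set v := Nat.gcd (d ⟨k - 2, by omega⟩) Q1 with hv
  set N := orderOf g * v with hN
  have hQ1pos : 0 < Q1 := by
    have : 1 < Fintype.card K := Fintype.one_lt_card
    omega
  -- divisibility chain
  have chain : ∀ n : ℕ, ∀ hn : n < k, ∀ m : ℕ, ∀ hm : m ≤ n, d ⟨m, by omega⟩ ∣ d ⟨n, hn⟩ := by
    intro n
    induction n with
    | zero => intro hn m hm; interval_cases m; exact dvd_rfl
    | succ p ih =>
      intro hn m hm
      rcases Nat.lt_or_ge m (p + 1) with h | h
      · exact (ih (by omega) m (by omega)).trans (hdvd ⟨p, by omega⟩ hn)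
      · have : m = p + 1 := by omega
        subst this; exact dvd_rfl
  -- each generator is killed by N
  have keyj : ∀ j : Fin k, N • φ (e j) = 0 := by
    intro j
    rw [← addOrderOf_dvd_iff_nsmul_eq_zero]
    rcases eq_or_ne (j : ℕ) (k - 1) with h | h
    · have hj : j = ⟨k - 1, by omega⟩ := Fin.ext h
      have heq : addOrderOf (φ (e ⟨k - 1, by omega⟩)) = orderOf g := by
        conv_lhs => rw [← ofMul_toMul (φ (e ⟨k - 1, by omega⟩))]
        rw [addOrderOf_ofMul_eq_orderOf]
      rw [hj, heq]; exact dvd_mul_right _ _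
    · have h1 : addOrderOf (φ (e j)) ∣ d j := by
        rw [← hord j]; exact addOrderOf_map_dvd φ (e j)
    -- also divides Q1
      have h2 : addOrderOf (φ (e j)) ∣ Q1 := by
        have : addOrderOf (φ (e j)) = orderOf (Additive.toMul (φ (e j))) := rfl
        rw [this, hQ1, ← Fintype.card_units, ← Nat.card_eq_fintype_card]
        exact orderOf_dvd_natCard _
      have h3 : d j ∣ d ⟨k - 2, by omega⟩ := by
        have hj2 : (j : ℕ) ≤ k - 2 := by have := j.isLt; omega
        have := chain (k - 2) (by omega) j hj2
        simpa using this
      have h4 : addOrderOf (φ (e j)) ∣ v := Nat.dvd_gcd (h1.trans h3) h2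
      exact h4.trans (dvd_mul_left v (orderOf g))
  -- everything in the quotient is killed by N
  have keyd : ∀ x : DirectSum (Fin k) (fun j => AddSubgroup.zmultiples (e j)),
      N • φ ((DirectSum.coeAddMonoidHom (fun j : Fin k => AddSubgroup.zmultiples (e j))) x) = 0 := by
    intro x
    refine DirectSum.induction_on x (by simp) (fun j a => ?_)
      (fun x y hx hy => by rw [map_add, map_add, nsmul_add, hx, hy, add_zero])
    obtain ⟨n, hn⟩ := a.2
    rw [DirectSum.coeAddMonoidHom_of]
    have ha : (a : (I → ℤ) ⧸ Γ) = n • e j := hn.symm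
    rw [ha, map_zsmul, ← natCast_zsmul, ← mul_smul, mul_comm, mul_smul, natCast_zsmul,
      keyj j, smul_zero]
  have keyz : ∀ z : (I → ℤ) ⧸ Γ, N • φ z = 0 := by
    intro z
    obtain ⟨x, hx⟩ := hinternal.surjective z
    rw [← hx]
    exact keyd x
  -- all units are killed by N
  have keyu : ∀ x : Kˣ, x ^ N = 1 := by
    intro x
    have hx : x ∈ Subgroup.closure (Set.range β) := hβ ▸ Subgroup.mem_top x
    induction hx using Subgroup.closure_induction with
    | mem y hy =>
      obtain ⟨i, rfl⟩ := hy
      have := keyz (QuotientAddGroup.mk (Pi.single i (1 : ℤ)))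
      rw [hφ] at this
      have hprod : (∏ j, β j ^ ((Pi.single i (1 : ℤ) : I → ℤ) j)) = β i := by
        rw [Finset.prod_eq_single i (fun b _ hb => by
          rw [Pi.single_eq_of_ne hb, zpow_zero]) (by simp)]
        simp
      rw [hprod, ← ofMul_pow] at this
      exact Additive.ofMul.injective this
    | one => simp
    | mul a b _ _ ha hb => rw [mul_pow, ha, hb, one_mul]
    | inv a _ ha => rw [inv_pow, ha, inv_one]
  -- exponent divides N
  have hexp : Q1 ∣ N := by
    have h1 : Monoid.exponent Kˣ ∣ N := Monoid.exponent_dvd_of_forall_pow_eq_one keyu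
    have h2 : Monoid.exponent Kˣ = Q1 := by
      rw [IsCyclic.exponent_eq_card, Nat.card_eq_fintype_card, Fintype.card_units]
    rwa [h2] at h1
  refine ⟨v, Nat.gcd_pos_of_pos_right _ hQ1pos, Nat.gcd_dvd_right _ _, hsmooth, ?_⟩
  rw [Nat.div_dvd_iff_dvd_mul (Nat.gcd_dvd_right _ _) (Nat.gcd_pos_of_pos_right _ hQ1pos)]
  rwa [hN, mul_comm] at hexp
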